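/- Let R be a faithful signed groupoid set. (a) An element ω ∈ ₐG is a maximum of the weak order at a if and only if Φ_ω equals the set of positive real roots at a. (b) If R is antipodal with maximum ωₐ : wₐ → a at each object a, then ω_{wₐ} = ωₐ⁻¹, and for any g : a → b, Φ_{g ωₐ} = (positive real roots at b) \ Φ_g. -/
import Mathlib


open CategoryTheory

universe u v

/-- A signed groupoid set: a groupoid `G` acting on a family of definitely involuted
sets `R a` (`a ∈ Ob G`), with involution `neg`, positive parts `pos a`, and the action
commuting with the involution. -/
structure SGS (G : Type u) [Groupoid G] (R : G → Type v) where
  neg : ∀ {a : G}, R a → R a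
  pos : ∀ a : G, Set (R a)
  act : ∀ {a b : G}, (b ⟶ a) → R b → R a
  neg_neg : ∀ {a : G} (x : R a), neg (neg x) = x
  pos_iff : ∀ {a : G} (x : R a), x ∈ pos a ↔ neg x ∉ pos a
  act_id : ∀ {a : G} (x : R a), act (𝟙 a) x = x
  act_comp : ∀ {a b c : G} (g : c ⟶ b) (f : b ⟶ a) (x : R c),
      act f (act g x) = act (g ≫ f) x
  act_neg : ∀ {a b : G} (f : b ⟶ a) (x : R b), act f (neg x) = neg (act f x)

/-- The morphisms of `G` with codomain `a`. -/
abbrev SHoms (G : Type u) [Groupoid G] (a : G) : Type _ := Σ b : G, (b ⟶ a)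

namespace SGS

variable {G : Type u} [Groupoid G] {R : G → Type v} (S : SGS G R)

/-- The inversion set of a morphism `f : b ⟶ a`: positive roots at `a` sent to
negative roots at `b` by `f⁻¹`. -/
def Phi {a b : G} (f : b ⟶ a) : Set (R a) :=
  {α | α ∈ S.pos a ∧ S.act (Groupoid.inv f) α ∉ S.pos b}

/-- The inversion set of an element of `SHoms G a`. -/
def PhiS {a : G} (g : SHoms G a) : Set (R a) := S.Phi g.2

/-- `S` is faithful if only identity morphisms have empty inversion set. -/
def Faithful : Prop :=
  ∀ ⦃a b : G⦄ (f : b ⟶ a), S.Phi f = ∅ → ∃ h : b = a, f = eqToHom h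

/-- `j` is an upper bound of `F` in the weak order at `a`. -/
def IsUB {a : G} (F : Set (SHoms G a)) (j : SHoms G a) : Prop :=
  ∀ g ∈ F, S.PhiS g ⊆ S.PhiS j

/-- `j` is a least upper bound of `F` in the weak order at `a`. -/
def IsLUBw {a : G} (F : Set (SHoms G a)) (j : SHoms G a) : Prop :=
  S.IsUB F j ∧ ∀ k : SHoms G a, S.IsUB F k → S.PhiS j ⊆ S.PhiS k

/-- `S` is complete: the weak order at every object is a complete lattice
(equivalently, every family of morphisms with a common codomain has a join). -/
def Complete : Prop := ∀ (a : G) (F : Set (SHoms G a)), ∃ j : SHoms G a, S.IsLUBw F j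

/-- `S` is finite: finitely many objects, morphisms and roots. -/
def FiniteSGS (_S : SGS G R) : Prop :=
  Finite G ∧ (∀ a b : G, Finite (a ⟶ b)) ∧ ∀ a : G, Finite (R a)

/-- A square `(x, w, y, z)`: a commuting square `xw = yz` with `x(Φ_w) = Φ_y`. -/
def Square {a b c d : G} (x : b ⟶ d) (w : a ⟶ b) (y : c ⟶ d) (z : a ⟶ c) : Prop :=
  w ≫ x = z ≫ y ∧ S.act x '' S.Phi w = S.Phi y

/-- The positive real roots at `a`: the union of all inversion sets at `a`. -/
def posRe (a : G) : Set (R a) := ⋃ g : SHoms G a, S.PhiS g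

/-- An atomic morphism: an atom of the weak order at its codomain. -/
def Atomic {a : G} (g : SHoms G a) : Prop :=
  S.PhiS g ≠ ∅ ∧ ∀ h : SHoms G a, S.PhiS h ⊆ S.PhiS g →
    S.PhiS h = ∅ ∨ S.PhiS h = S.PhiS g

/-- A simple morphism: one whose inversion set is a singleton. -/
def Simple {a b : G} (f : b ⟶ a) : Prop := ∃ α : R a, S.Phi f = {α}

/-- Interval finiteness: every interval `[1ₐ, g]` of a weak order is finite. -/
def IntervalFinite : Prop :=
  ∀ (a : G) (g : SHoms G a), {h : SHoms G a | S.PhiS h ⊆ S.PhiS g}.Finite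

/-- Preprincipal: interval finite, and the inversion set of an atomic morphism is
contained in, or disjoint from, any other inversion set at the same object. -/
def Preprincipal : Prop :=
  S.IntervalFinite ∧ ∀ (a : G) (s g : SHoms G a), S.Atomic s →
    S.PhiS s ⊆ S.PhiS g ∨ S.PhiS s ∩ S.PhiS g = ∅

/-- Antipodal: the weak order at each object has a maximum element. -/
def Antipodal : Prop :=
  ∀ a : G, ∃ ω : SHoms G a, ∀ g : SHoms G a, S.PhiS g ⊆ S.PhiS ω

lemma act_act_inv' {a b : G} (f : b ⟶ a) (x : R b) :
    S.act (Groupoid.inv f) (S.act f x) = x := by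
  rw [S.act_comp, Groupoid.comp_inv, S.act_id]

lemma act_inv_act' {a b : G} (f : b ⟶ a) (x : R a) :
    S.act f (S.act (Groupoid.inv f) x) = x := by
  rw [S.act_comp, Groupoid.inv_comp, S.act_id]

lemma neg_mem_pos_iff' {a : G} (x : R a) : S.neg x ∈ S.pos a ↔ x ∉ S.pos a := by
  have h := S.pos_iff x
  tauto

lemma phi_subset_posRe' {a b : G} (f : b ⟶ a) : S.Phi f ⊆ S.posRe a :=
  Set.subset_iUnion (fun g : SHoms G a => S.PhiS g) ⟨b, f⟩

/-- If a positive root is real and not in `Φ g`, its transfer along `g⁻¹` is real. -/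
lemma real_transfer' {a b : G} (g : b ⟶ a) {α : R a} (hre : α ∈ S.posRe a)
    (hg : α ∉ S.Phi g) : S.act (Groupoid.inv g) α ∈ S.posRe b := by
  obtain ⟨⟨c, h⟩, hα⟩ := Set.mem_iUnion.mp hre
  have hpos : α ∈ S.pos a := hα.1
  have hpos' : S.act (Groupoid.inv g) α ∈ S.pos b := by
    by_contra hc
    exact hg ⟨hpos, hc⟩
  refine Set.mem_iUnion.mpr ⟨⟨c, h ≫ Groupoid.inv g⟩, hpos', ?_⟩
  have e : S.act (Groupoid.inv (h ≫ Groupoid.inv g)) (S.act (Groupoid.inv g) α)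
      = S.act (Groupoid.inv h) α := by
    rw [S.act_comp]
    congr 1
    simp [Groupoid.inv_eq_inv]
  rw [e]
  exact hα.2

/-- Two morphisms with the same inversion set differ by a morphism with empty
inversion set. -/
lemma phi_comp_inv_empty' {a c d : G} (j : c ⟶ a) (k : d ⟶ a)
    (h : S.Phi j = S.Phi k) : S.Phi (j ≫ Groupoid.inv k) = ∅ := by
  ext α
  simp only [Set.mem_empty_iff_false, iff_false]
  rintro ⟨hpos, hneg⟩
  have e : S.act (Groupoid.inv (j ≫ Groupoid.inv k)) α
      = S.act (Groupoid.inv j) (S.act k α) := by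
    rw [S.act_comp]
    congr 1
    simp [Groupoid.inv_eq_inv]
  rw [e] at hneg
  by_cases hb : S.act k α ∈ S.pos a
  · have : S.act k α ∈ S.Phi k := h ▸ ⟨hb, hneg⟩
    exact this.2 (by rw [S.act_act_inv']; exact hpos)
  · have hnb : S.neg (S.act k α) ∈ S.pos a := (S.neg_mem_pos_iff' _).mpr hb
    have : S.neg (S.act k α) ∈ S.Phi j := by
      rw [h]
      refine ⟨hnb, ?_⟩
      rw [← S.act_neg, S.act_act_inv']
      exact (S.pos_iff α).mp hpos
    have := this.2
    rw [S.act_neg] at this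
    exact this ((S.neg_mem_pos_iff' _).mpr hneg)

lemma eq_of_phiS_eq' (hfa : S.Faithful) {a : G} (p q : SHoms G a)
    (h : S.PhiS p = S.PhiS q) : p = q := by
  obtain ⟨c, j⟩ := p
  obtain ⟨d, k⟩ := q
  obtain ⟨hcd, he⟩ := hfa _ (S.phi_comp_inv_empty' j k h)
  subst hcd
  simp only [eqToHom_refl] at he
  have hjk : j = k := by
    have := congrArg (· ≫ k) he
    simpa [Category.assoc, Groupoid.inv_comp] using this
  rw [hjk]

end SGS

/-- (a) `ω ∈ ₐG` is a maximum of the weak order at `a` iff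
`Φ_ω` is the set of positive real roots at `a`; (b) if `R` is antipodal with maxima
`ωₐ : wₐ ⟶ a`, then `ω_{wₐ} = ωₐ⁻¹` and `Φ_{g ωₐ} = ᵦΦ⁺_re \ Φ_g` for `g : a ⟶ b`. -/
theorem stmt_12 {G : Type u} [Groupoid G] {R : G → Type v} (S : SGS G R)
    (hfa : S.Faithful) :
    (∀ (a : G) (ω : SHoms G a),
      (∀ g : SHoms G a, S.PhiS g ⊆ S.PhiS ω) ↔ S.PhiS ω = S.posRe a) ∧
    (∀ ω : ∀ a : G, SHoms G a,
      (∀ (a : G) (g : SHoms G a), S.PhiS g ⊆ S.PhiS (ω a)) →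
      (∀ a : G, ω ((ω a).1) = ⟨a, Groupoid.inv (ω a).2⟩) ∧
      (∀ (a b : G) (g : a ⟶ b), S.Phi ((ω a).2 ≫ g) = S.posRe b \ S.Phi g)) := by
  have hmaxPhi : ∀ (a : G) (ω0 : SHoms G a),
      (∀ g : SHoms G a, S.PhiS g ⊆ S.PhiS ω0) → S.PhiS ω0 = S.posRe a := by
    intro a ω0 h
    exact subset_antisymm (Set.subset_iUnion (fun g : SHoms G a => S.PhiS g) ω0)
      (Set.iUnion_subset h)
  refine ⟨fun a ω0 => ⟨hmaxPhi a ω0, fun h g =>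
    h ▸ Set.subset_iUnion (fun g : SHoms G a => S.PhiS g) g⟩, ?_⟩
  intro ω hmax
  have hPhi : ∀ a : G, S.PhiS (ω a) = S.posRe a := fun a => hmaxPhi a (ω a) (hmax a)
  have key : ∀ (a b : G) (g : a ⟶ b), S.Phi ((ω a).2 ≫ g) = S.posRe b \ S.Phi g := by
    intro a b g
    ext α
    constructor
    · rintro ⟨hpos, hneg⟩
      have e : S.act (Groupoid.inv ((ω a).2 ≫ g)) α
          = S.act (Groupoid.inv (ω a).2) (S.act (Groupoid.inv g) α) := by
        rw [S.act_comp]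
        congr 1
        simp [Groupoid.inv_eq_inv]
      rw [e] at hneg
      refine ⟨S.phi_subset_posRe' _ ⟨hpos, by rw [e]; exact hneg⟩, ?_⟩
      rintro ⟨-, hg⟩
      -- β := neg (g⁻¹ α) is positive at a and lies in Φ (inv g), hence is real,
      -- hence in Φ (ω a), contradicting hneg.
      set β := S.neg (S.act (Groupoid.inv g) α) with hβ
      have hβpos : β ∈ S.pos a := (S.neg_mem_pos_iff' _).mpr hg
      have hβre : β ∈ S.posRe a := by
        refine S.phi_subset_posRe' (Groupoid.inv g) ⟨hβpos, ?_⟩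
        have hinvinv : Groupoid.inv (Groupoid.inv g) = g := by
          simp [Groupoid.inv_eq_inv]
        rw [hβ, S.act_neg, hinvinv, S.act_inv_act']
        exact (S.pos_iff α).mp hpos
      rw [← hPhi a] at hβre
      have := hβre.2
      rw [hβ, S.act_neg] at this
      exact this ((S.neg_mem_pos_iff' _).mpr hneg)
    · rintro ⟨hre, hng⟩
      have hpos : α ∈ S.pos b := by
        obtain ⟨gg, hα⟩ := Set.mem_iUnion.mp hre
        exact hα.1
      have htr : S.act (Groupoid.inv g) α ∈ S.posRe a := S.real_transfer' g hre hng
      rw [← hPhi a] at htr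
      refine ⟨hpos, ?_⟩
      have e : S.act (Groupoid.inv ((ω a).2 ≫ g)) α
          = S.act (Groupoid.inv (ω a).2) (S.act (Groupoid.inv g) α) := by
        rw [S.act_comp]
        congr 1
        simp [Groupoid.inv_eq_inv]
      rw [e]
      exact htr.2
  refine ⟨?_, key⟩
  intro a
  set w := (ω a).1 with hw
  set m := (ω a).2 with hm
  -- Φ (𝟙 w) = ∅
  have hid : S.Phi (𝟙 w) = ∅ := by
    ext α
    simp only [Set.mem_empty_iff_false, iff_false]
    rintro ⟨hpos, hneg⟩
    have : Groupoid.inv (𝟙 w) = 𝟙 w := by simp [Groupoid.inv_eq_inv]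
    rw [this, S.act_id] at hneg
    exact hneg hpos
  have hcomp : S.Phi (m ≫ Groupoid.inv m) = S.posRe w \ S.Phi (Groupoid.inv m) :=
    key a w (Groupoid.inv m)
  rw [Groupoid.comp_inv, hid] at hcomp
  have hsub : S.posRe w ⊆ S.Phi (Groupoid.inv m) := by
    intro α hα
    by_contra hc
    exact (Set.ext_iff.mp hcomp.symm α).mp ⟨hα, hc⟩
  have hinv : S.PhiS (⟨a, Groupoid.inv m⟩ : SHoms G w) = S.posRe w :=
    subset_antisymm (S.phi_subset_posRe' _) hsub
  exact S.eq_of_phiS_eq' hfa _ _ (by rw [hPhi w, hinv])
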